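/- Let n ≥ 2 and let S(n,·) : (0,√n) → (0, 1/2) be the strictly decreasing function S(n,α) = (∫_{α/√n}^{1}(1-t²)^{(n-3)/2} dt)/(2∫_0^1(1-t²)^{(n-3)/2} dt), with inverse S^{-1}(n,·). Then for every β ∈ (0, 0.5), S^{-1}(n,β) < √((20/9) ln(1/β)). -/

import Mathlib

set_option maxHeartbeats 1000000
open MeasureTheory intervalIntegral Set Real


private lemma maj_int : IntervalIntegrable (fun t : ℝ => (1 - t) ^ (-(1/2) : ℝ)) volume 0 1 := by
  have h := (intervalIntegrable_rpow' (a := 0) (b := 1) (r := -(1/2)) (by norm_num)).comp_sub_left 1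
  norm_num at h
  exact h.symm

private lemma g2_int : IntervalIntegrable (fun t : ℝ => (1 - t^2) ^ (-(1/2) : ℝ)) volume 0 1 := by
  apply maj_int.mono_fun
  · have hm : Measurable (fun t : ℝ => (Real.sqrt (1 - t^2))⁻¹) :=
      ((Real.continuous_sqrt.comp (continuous_const.sub (continuous_pow 2))).measurable).inv
    apply hm.aestronglyMeasurable.congr
    filter_upwards [ae_restrict_mem measurableSet_uIoc] with t ht
    rw [Set.uIoc_of_le (by norm_num : (0:ℝ) ≤ 1)] at ht
    have hb : (0:ℝ) ≤ 1 - t^2 := by nlinarith [ht.1, ht.2]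
    rw [Real.sqrt_eq_rpow, ← Real.rpow_neg hb]
  · filter_upwards [ae_restrict_mem measurableSet_uIoc] with t ht
    rw [Set.uIoc_of_le (by norm_num : (0:ℝ) ≤ 1)] at ht
    obtain ⟨ht0, ht1⟩ := ht
    have hb0 : (0:ℝ) ≤ 1 - t^2 := by nlinarith
    have hb1 : (0:ℝ) ≤ 1 - t := by linarith
    rw [Real.norm_of_nonneg (Real.rpow_nonneg hb0 _), Real.norm_of_nonneg (Real.rpow_nonneg hb1 _)]
    rcases eq_or_lt_of_le ht1 with h1 | h1
    · subst h1
      rw [show (1:ℝ) - 1^2 = 0 by norm_num, show (1:ℝ) - 1 = 0 by norm_num,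
        Real.zero_rpow (by norm_num)]
    · exact Real.rpow_le_rpow_of_nonpos (by nlinarith) (by nlinarith) (by norm_num)

private lemma ftc2 (x : ℝ) (hx0 : 0 ≤ x) (hx1 : x ≤ 1) :
    ∫ t in x..1, (1 - t) ^ (-(1/2) : ℝ) = 2 * (1 - x) ^ ((1/2) : ℝ) := by
  have hcont : ContinuousOn (fun t : ℝ => -2 * (1 - t) ^ ((1/2) : ℝ)) (Icc x 1) := by
    apply Continuous.continuousOn
    apply continuous_const.mul
    rw [continuous_iff_continuousAt]; intro t
    exact (continuous_const.sub continuous_id).continuousAt.rpow_const (Or.inr (by norm_num))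
  have hderiv : ∀ t ∈ Ioo x 1, HasDerivWithinAt (fun t : ℝ => -2 * (1 - t) ^ ((1/2) : ℝ))
      ((1 - t) ^ (-(1/2) : ℝ)) (Ioi t) t := by
    intro t ht
    have h1 : HasDerivAt (fun t : ℝ => 1 - t) (-1) t := (hasDerivAt_id t).const_sub 1
    have h2 := h1.rpow_const (p := (1/2)) (Or.inl (by nlinarith [ht.2] : (1:ℝ) - t ≠ 0))
    have h3 := h2.const_mul (-2 : ℝ)
    refine h3.hasDerivWithinAt.congr_deriv ?_
    rw [show (1/2 : ℝ) - 1 = -(1/2) by norm_num]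
    ring
  have hint : IntervalIntegrable (fun t : ℝ => (1 - t) ^ (-(1/2) : ℝ)) volume x 1 := by
    apply maj_int.mono_set
    rw [Set.uIcc_of_le hx1, Set.uIcc_of_le (by norm_num : (0:ℝ) ≤ 1)]
    exact Icc_subset_Icc hx0 le_rfl
  have heval := integral_eq_sub_of_hasDeriv_right_of_le hx1 hcont hderiv hint
  rw [heval]
  norm_num

private lemma ftc_main (p c : ℝ) (hp : 1 ≤ p) (hc0 : 0 ≤ c) (hc1 : c ≤ 1) :
    ∫ t in c..1, t * (1 - t^2) ^ (p - 1 : ℝ) = (1 - c^2) ^ (p : ℝ) / (2*p) := by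
  have hp0 : (0:ℝ) < p := lt_of_lt_of_le one_pos hp
  have hcontg : Continuous fun t : ℝ => (1 - t^2) ^ (p - 1 : ℝ) := by
    rw [continuous_iff_continuousAt]; intro t
    exact (continuous_const.sub (continuous_pow 2)).continuousAt.rpow_const (Or.inr (by linarith))
  have hcontF : ContinuousOn (fun t : ℝ => -((1 - t^2) ^ (p : ℝ) / (2*p))) (Icc c 1) := by
    apply Continuous.continuousOn
    apply Continuous.neg
    apply Continuous.div_const
    rw [continuous_iff_continuousAt]; intro t
    exact (continuous_const.sub (continuous_pow 2)).continuousAt.rpow_const (Or.inr (by linarith))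
  have hderiv : ∀ t ∈ Ioo c 1, HasDerivWithinAt (fun t : ℝ => -((1 - t^2) ^ (p:ℝ) / (2*p)))
      (t * (1 - t^2) ^ (p - 1 : ℝ)) (Ioi t) t := by
    intro t ht
    have hne : (1 : ℝ) - t^2 ≠ 0 := by nlinarith [ht.1, ht.2, hc0]
    have h1 : HasDerivAt (fun t : ℝ => 1 - t^2) (-(2*t)) t := by
      simpa using ((hasDerivAt_pow 2 t).const_sub 1)
    have h2 := h1.rpow_const (p := p) (Or.inl hne)
    have h3 := (h2.div_const (2*p)).neg
    refine h3.hasDerivWithinAt.congr_deriv ?_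
    field_simp
  have hint : IntervalIntegrable (fun t : ℝ => t * (1 - t^2) ^ (p - 1 : ℝ)) volume c 1 :=
    (continuous_id.mul hcontg).intervalIntegrable c 1
  have heval := integral_eq_sub_of_hasDeriv_right_of_le hc1 hcontF hderiv hint
  rw [heval]
  norm_num [Real.zero_rpow (ne_of_gt hp0)]

private lemma exp_secant {l r A B u : ℝ} (hlr : l < r) (hu1 : l ≤ u) (hu2 : u ≤ r)
    (hA : Real.exp l ≤ A) (hB : Real.exp r ≤ B) :
    Real.exp u ≤ (A * (r - u) + B * (u - l)) / (r - l) := by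
  have hrl : (0:ℝ) < r - l := by linarith
  have h1 : 0 ≤ (r - u) / (r - l) := div_nonneg (by linarith) hrl.le
  have h2 : 0 ≤ (u - l) / (r - l) := div_nonneg (by linarith) hrl.le
  have hsum : (r - u)/(r - l) + (u - l)/(r - l) = 1 := by field_simp; ring
  have h := convexOn_exp.2 (Set.mem_univ l) (Set.mem_univ r) h1 h2 hsum
  simp only [smul_eq_mul] at h
  have harg : (r - u)/(r - l) * l + (u - l)/(r - l) * r = u := by
    field_simp; ring
  rw [harg] at h
  calc Real.exp u ≤ (r-u)/(r-l) * Real.exp l + (u-l)/(r-l) * Real.exp r := h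
    _ ≤ (r-u)/(r-l) * A + (u-l)/(r-l) * B := by gcongr
    _ = (A*(r-u) + B*(u-l))/(r-l) := by field_simp



private lemma case2 (β α : ℝ) (hβ0 : 0 < β) (hα0 : 0 < α) (hα2 : α^2 < 2) (hα15 : (1.5403:ℝ) < α^2)
    (hSα : (∫ t in (α / Real.sqrt 2)..1, (1 - t ^ 2) ^ (-(1/2) : ℝ)) /
        (2 * ∫ t in (0:ℝ)..1, (1 - t ^ 2) ^ (-(1/2) : ℝ)) = β) :
    β < Real.exp (-(9/20) * α^2) := by
  set x := α / Real.sqrt 2 with hxdef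
  have hs2 : (0:ℝ) < Real.sqrt 2 := Real.sqrt_pos.mpr (by norm_num)
  have hsq : (Real.sqrt 2)^2 = 2 := Real.sq_sqrt (by norm_num)
  have hx2 : x^2 = α^2/2 := by rw [hxdef, div_pow, hsq]
  have hx0 : 0 < x := div_pos hα0 hs2
  have hx1 : x < 1 := by nlinarith
  have hx87 : (0.8775:ℝ) < x := by nlinarith
  have hsub : Set.uIcc x 1 ⊆ Set.uIcc (0:ℝ) 1 := by
    rw [Set.uIcc_of_le hx1.le, Set.uIcc_of_le (by norm_num : (0:ℝ) ≤ 1)]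
    exact Icc_subset_Icc hx0.le le_rfl
  have hgx : IntervalIntegrable (fun t : ℝ => (1 - t^2) ^ (-(1/2) : ℝ)) volume x 1 :=
    g2_int.mono_set hsub
  have hmx : IntervalIntegrable (fun t : ℝ => (1 - t) ^ (-(1/2) : ℝ)) volume x 1 :=
    maj_int.mono_set hsub
  have hN : (∫ t in x..1, (1 - t^2) ^ (-(1/2) : ℝ)) ≤ 2 * (1-x) ^ ((1/2):ℝ) := by
    rw [← ftc2 x hx0.le hx1.le]
    apply integral_mono_on hx1.le hgx hmx
    intro t ht
    obtain ⟨ht0, ht1⟩ := ht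
    rcases eq_or_lt_of_le ht1 with h1 | h1
    · subst h1
      rw [show (1:ℝ) - 1^2 = 0 by norm_num, show (1:ℝ) - 1 = 0 by norm_num]
    · exact Real.rpow_le_rpow_of_nonpos (by nlinarith) (by nlinarith) (by norm_num)
  have hN7 : (∫ t in x..1, (1 - t^2) ^ (-(1/2) : ℝ)) ≤ 0.7 := by
    have h1 : (1:ℝ) - x ≤ 0.1225 := by linarith
    have h2 : (1 - x) ^ ((1/2):ℝ) ≤ 0.35 := by
      rw [← Real.sqrt_eq_rpow]
      calc Real.sqrt (1-x) ≤ Real.sqrt 0.1225 := Real.sqrt_le_sqrt h1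
        _ = 0.35 := by
            rw [show (0.1225:ℝ) = 0.35^2 by norm_num]
            exact Real.sqrt_sq (by norm_num)
    linarith
  have hg99 : IntervalIntegrable (fun t : ℝ => (1 - t^2) ^ (-(1/2) : ℝ)) volume 0 0.99 := by
    apply g2_int.mono_set
    rw [Set.uIcc_of_le (by norm_num : (0:ℝ) ≤ 0.99), Set.uIcc_of_le (by norm_num : (0:ℝ) ≤ 1)]
    exact Icc_subset_Icc le_rfl (by norm_num)
  have hg99' : IntervalIntegrable (fun t : ℝ => (1 - t^2) ^ (-(1/2) : ℝ)) volume 0.99 1 := by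
    apply g2_int.mono_set
    rw [Set.uIcc_of_le (by norm_num : (0.99:ℝ) ≤ 1), Set.uIcc_of_le (by norm_num : (0:ℝ) ≤ 1)]
    exact Icc_subset_Icc (by norm_num) le_rfl
  have hI : (0.99:ℝ) ≤ ∫ t in (0:ℝ)..1, (1 - t^2) ^ (-(1/2) : ℝ) := by
    rw [← integral_add_adjacent_intervals hg99 hg99']
    have h1 : (0.99:ℝ) ≤ ∫ t in (0:ℝ)..0.99, (1 - t^2) ^ (-(1/2) : ℝ) := by
      have hmono := integral_mono_on (μ := volume) (a := (0:ℝ)) (b := 0.99)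
        (f := fun _ => (1:ℝ)) (g := fun t => (1 - t^2) ^ (-(1/2) : ℝ))
        (by norm_num) intervalIntegrable_const hg99 (fun t ht => by
          exact Real.one_le_rpow_of_pos_of_le_one_of_nonpos
            (by nlinarith [ht.1, ht.2]) (by nlinarith [ht.1, ht.2]) (by norm_num))
      simpa using hmono
    have h2 : (0:ℝ) ≤ ∫ t in (0.99:ℝ)..1, (1 - t^2) ^ (-(1/2) : ℝ) :=
      integral_nonneg (by norm_num) (fun t ht => Real.rpow_nonneg (by nlinarith [ht.1, ht.2]) _)
    linarith
  have hE : (0.4046:ℝ) < Real.exp (-(9/20) * α^2) := by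
    have h1 : Real.exp (-0.9) < Real.exp (-(9/20)*α^2) := Real.exp_lt_exp.mpr (by nlinarith)
    have h2 : (0.4046:ℝ) < Real.exp (-0.9) := by
      rw [show (-0.9:ℝ) = 0.1 + (-1) by norm_num, Real.exp_add]
      nlinarith [Real.add_one_le_exp (0.1:ℝ), Real.exp_neg_one_gt_d9, Real.exp_pos (0.1:ℝ)]
    linarith
  rw [← hSα]
  rw [div_lt_iff₀ (by linarith : (0:ℝ) < 2 * ∫ t in (0:ℝ)..1, (1 - t^2) ^ (-(1/2) : ℝ))]
  have hprod : (0.4046:ℝ) * 1.98 ≤ Real.exp (-(9/20) * α^2) *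
      (2 * ∫ t in (0:ℝ)..1, (1 - t^2) ^ (-(1/2) : ℝ)) :=
    mul_le_mul hE.le (by linarith) (by norm_num) (Real.exp_pos _).le
  linarith [hN7, hprod]

private lemma case3 (β α : ℝ) (hα0 : 0 < α) (hα3 : α^2 < 3) (hα15 : (1.5403:ℝ) < α^2)
    (hSα : (∫ t in (α / Real.sqrt 3)..1, (1:ℝ)) / (2 * ∫ t in (0:ℝ)..1, (1:ℝ)) = β) :
    β < Real.exp (-(9/20) * α^2) := by
  have hs3 : (0:ℝ) < Real.sqrt 3 := Real.sqrt_pos.mpr (by norm_num)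
  have hsq : (Real.sqrt 3)^2 = 3 := Real.sq_sqrt (by norm_num)
  set x := α / Real.sqrt 3 with hxdef
  have hx2 : x^2 = α^2/3 := by rw [hxdef, div_pow, hsq]
  have hx0 : 0 < x := div_pos hα0 hs3
  have hx71 : (0.7165:ℝ) < x := by nlinarith
  have h1 : (∫ t in x..1, (1:ℝ)) = 1 - x := by simp
  have h2 : (∫ t in (0:ℝ)..1, (1:ℝ)) = 1 := by simp
  rw [h1, h2] at hSα
  have hE : (0.1418:ℝ) < Real.exp (-(9/20)*α^2) := by
    have ha : Real.exp (-1.5) < Real.exp (-(9/20)*α^2) := Real.exp_lt_exp.mpr (by nlinarith)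
    have hb : (0.1418:ℝ) < Real.exp (-1.5) := by
      have hh : Real.exp (-1.5) * Real.exp (-1.5)
          = Real.exp (-1) * (Real.exp (-1) * Real.exp (-1)) := by
        rw [← Real.exp_add, ← Real.exp_add, ← Real.exp_add]; norm_num
      nlinarith [Real.exp_neg_one_gt_d9, Real.exp_pos (-1.5:ℝ), Real.exp_pos (-1:ℝ), hh]
    linarith
  rw [← hSα, mul_one]
  have : (1-x)/2 < 0.1418 := by linarith
  linarith [hE]



private lemma expA : Real.exp (0.11:ℝ) ≤ 1.1237 := by
  have h := Real.add_one_le_exp (-0.11:ℝ)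
  rw [show (-0.11:ℝ) = -(0.11) by norm_num, Real.exp_neg] at h
  have h5 := inv_anti₀ (by norm_num : (0:ℝ) < 0.89)
    (by linarith : (0.89:ℝ) ≤ (Real.exp 0.11)⁻¹)
  rw [inv_inv] at h5
  calc Real.exp 0.11 ≤ (0.89:ℝ)⁻¹ := h5
    _ ≤ 1.1237 := by norm_num

private lemma expB : Real.exp (0.68:ℝ) ≤ 2.0594 := by
  have h1 : Real.exp (0.68:ℝ) = Real.exp 1 * Real.exp (-0.32) := by
    rw [← Real.exp_add]; norm_num
  have h4 : Real.exp (-0.32:ℝ) ≤ 1/1.32 := by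
    rw [show (-0.32:ℝ) = -(0.32) by norm_num, Real.exp_neg,
      show (1:ℝ)/1.32 = (1.32:ℝ)⁻¹ from by norm_num]
    exact inv_anti₀ (by norm_num) (by linarith [Real.add_one_le_exp (0.32:ℝ)])
  rw [h1]
  calc Real.exp 1 * Real.exp (-0.32) ≤ 2.7182818286 * (1/1.32) :=
        mul_le_mul Real.exp_one_lt_d9.le h4 (Real.exp_pos _).le (by norm_num)
    _ ≤ 2.0594 := by norm_num

private lemma expHalf : Real.exp ((1:ℝ)/2) ≤ 1.6488 := by
  have h : Real.exp ((1:ℝ)/2) * Real.exp ((1:ℝ)/2) = Real.exp 1 := by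
    rw [← Real.exp_add]; norm_num
  nlinarith [Real.exp_one_lt_d9, Real.exp_pos ((1:ℝ)/2)]

private lemma secBound (α : ℝ) (hl : (1.5403:ℝ) < α^2) (hr : α^2 ≤ 9) :
    Real.exp (0.075*α^2) ≤ (1.1237*(0.68 - 0.075*α^2)
      + 2.0594*(0.075*α^2 - 0.11))/(0.68 - 0.11) :=
  exp_secant (by norm_num) (by nlinarith) (by nlinarith) expA expB

private lemma coreNum (α : ℝ) (h1 : (1.241:ℝ) < α) (h2 : α ≤ 3) :
    1.1548 * (1.6488 * ((1.1237*(0.68 - 0.075*α^2)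
      + 2.0594*(0.075*α^2 - 0.11))/(0.68 - 0.11))) < 2*α := by
  have key : (0.537582 + 0.0701775*α^2) * (1.1548*1.6488) < 2*α*0.57 := by
    nlinarith [mul_nonneg (by linarith : (0:ℝ) ≤ α - 1.241) (by linarith : (0:ℝ) ≤ 3 - α)]
  have h4 : (1.1237:ℝ)*(0.68 - 0.075*α^2) + 2.0594*(0.075*α^2 - 0.11)
      = 0.537582 + 0.0701775*α^2 := by ring
  rw [h4, show (0.68:ℝ) - 0.11 = 0.57 by norm_num]
  calc 1.1548 * (1.6488 * ((0.537582 + 0.0701775*α^2) / 0.57))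
      = ((0.537582 + 0.0701775*α^2) * (1.1548*1.6488)) / 0.57 := by ring
    _ < (2*α*0.57) / 0.57 := by gcongr
    _ = 2*α := by field_simp

private lemma core (nr p s s1 α x β N I : ℝ)
    (hnr4 : 4 ≤ nr) (hsplit10 : nr ≤ 9 ∨ 10 ≤ nr)
    (hpdef : p = (nr-1)/2) (hssq : s^2 = nr) (hs_pos : 0 < s)
    (hs1sq : s1^2 = nr-1) (hs1_pos : 0 < s1)
    (hα0 : 0 < α) (hα15 : (1.5403:ℝ) < α^2) (hα2n : α^2 < nr)
    (hxdef : x = α/s)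
    (hβdef : β = N/(2*I))
    (hN : N ≤ (s/α) * ((1 - x^2) ^ (p:ℝ) / (2*p)))
    (hI : Real.exp (-(1/2)) * s1⁻¹ ≤ I) :
    β < Real.exp (-(9/20) * α^2) := by
  have hp0 : (0:ℝ) < p := by rw [hpdef]; linarith
  have hx0 : 0 < x := by rw [hxdef]; exact div_pos hα0 hs_pos
  have hαs : α < s := by nlinarith
  have hx1 : x < 1 := by rw [hxdef]; exact (div_lt_one hs_pos).mpr hαs
  have hx2 : x^2 = α^2/nr := by rw [hxdef, div_pow, hssq]
  have hα124 : (1.241:ℝ) < α := by nlinarith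
  have key2 : s * (Real.exp ((1:ℝ)/2) * Real.exp ((9/20 - p/nr) * α^2)) < 2*s1*α := by
    rcases hsplit10 with h9 | h10
    · -- 4 ≤ nr ≤ 9
      have hα29 : α^2 ≤ 9 := by linarith
      have hα3 : α ≤ 3 := by nlinarith
      have hδ : (9/20 - p/nr)*α^2 ≤ 0.075*α^2 := by
        apply mul_le_mul_of_nonneg_right _ (sq_nonneg α)
        have hpd : p/nr = (nr-1)/(2*nr) := by rw [hpdef, div_div]
        have h38 : (3:ℝ)/8 ≤ (nr-1)/(2*nr) := by
          rw [le_div_iff₀ (by linarith : (0:ℝ) < 2*nr)]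
          linarith
        rw [hpd]
        linarith
      have hEδ : Real.exp ((9/20-p/nr)*α^2) ≤ Real.exp (0.075*α^2) := Real.exp_le_exp.mpr hδ
      have hsec := secBound α hα15 hα29
      have hss1 : s ≤ 1.1548 * s1 := by
        have h1 : nr ≤ 1.33356304 * (nr - 1) := by linarith
        have h2 : s ≤ Real.sqrt (1.33356304 * (nr-1)) := by
          rw [show s = Real.sqrt nr from by rw [← hssq, Real.sqrt_sq hs_pos.le]]
          exact Real.sqrt_le_sqrt h1
        calc s ≤ Real.sqrt (1.33356304 * (nr-1)) := h2
          _ = Real.sqrt 1.33356304 * Real.sqrt (nr-1) := Real.sqrt_mul (by norm_num) _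
          _ = 1.1548 * s1 := by
              rw [show (1.33356304:ℝ) = 1.1548^2 by norm_num, Real.sqrt_sq (by norm_num),
                show Real.sqrt (nr-1) = s1 from by rw [← hs1sq, Real.sqrt_sq hs1_pos.le]]
      have hnum := coreNum α hα124 hα3
      have hsecnn : (0:ℝ) ≤ (1.1237*(0.68 - 0.075*α^2) + 2.0594*(0.075*α^2 - 0.11))/(0.68 - 0.11) :=
        le_trans (Real.exp_pos _).le hsec
      calc s * (Real.exp ((1:ℝ)/2) * Real.exp ((9/20-p/nr)*α^2))
          ≤ (1.1548*s1) * (1.6488 * ((1.1237*(0.68 - 0.075*α^2)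
              + 2.0594*(0.075*α^2 - 0.11))/(0.68-0.11))) := by
            apply mul_le_mul hss1 _ (by positivity) (by positivity)
            exact mul_le_mul expHalf (le_trans hEδ hsec) (Real.exp_pos _).le (by norm_num)
        _ = s1 * (1.1548 * (1.6488 * ((1.1237*(0.68 - 0.075*α^2)
              + 2.0594*(0.075*α^2 - 0.11))/(0.68-0.11)))) := by ring
        _ < s1 * (2*α) := mul_lt_mul_of_pos_left hnum hs1_pos
        _ = 2*s1*α := by ring
    · -- nr ≥ 10
      have hδ : (9/20 - p/nr) * α^2 ≤ 0 := by
        apply mul_nonpos_of_nonpos_of_nonneg _ (sq_nonneg α)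
        rw [sub_nonpos, hpdef, div_div, le_div_iff₀ (by linarith : (0:ℝ) < 2*nr)]
        linarith
      have hE1 : Real.exp ((9/20 - p/nr)*α^2) ≤ 1 := Real.exp_le_one_iff.mpr hδ
      have hss1 : s ≤ 1.0542 * s1 := by
        have h1 : nr ≤ 1.11133764 * (nr - 1) := by linarith
        have h2 : s ≤ Real.sqrt (1.11133764 * (nr-1)) := by
          rw [show s = Real.sqrt nr from by rw [← hssq, Real.sqrt_sq hs_pos.le]]
          exact Real.sqrt_le_sqrt h1
        calc s ≤ Real.sqrt (1.11133764 * (nr-1)) := h2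
          _ = Real.sqrt 1.11133764 * Real.sqrt (nr-1) := Real.sqrt_mul (by norm_num) _
          _ = 1.0542 * s1 := by
              rw [show (1.11133764:ℝ) = 1.0542^2 by norm_num, Real.sqrt_sq (by norm_num),
                show Real.sqrt (nr-1) = s1 from by rw [← hs1sq, Real.sqrt_sq hs1_pos.le]]
      calc s * (Real.exp ((1:ℝ)/2) * Real.exp ((9/20 - p/nr)*α^2)) ≤ s * (1.6488 * 1) := by
            apply mul_le_mul_of_nonneg_left _ hs_pos.le
            exact mul_le_mul expHalf hE1 (Real.exp_pos _).le (by norm_num)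
        _ = 1.6488 * s := by ring
        _ ≤ 1.6488 * (1.0542*s1) := by nlinarith
        _ < 2*s1*α := by nlinarith
  set E1 := Real.exp (-(9/20) * α^2) with hE1def
  have hE1pos : 0 < E1 := Real.exp_pos _
  have hW : (1 - x^2) ^ (p:ℝ) ≤ E1 * Real.exp ((9/20 - p/nr)*α^2) := by
    calc (1 - x^2) ^ (p:ℝ) ≤ (Real.exp (-x^2)) ^ (p:ℝ) :=
          Real.rpow_le_rpow (by nlinarith)
            (by nlinarith [Real.add_one_le_exp (-x^2)]) hp0.le
      _ = Real.exp (-x^2 * p) := (Real.exp_mul _ _).symm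
      _ = E1 * Real.exp ((9/20 - p/nr)*α^2) := by
          rw [hE1def, ← Real.exp_add]
          congr 1
          rw [hx2]
          field_simp
          ring
  have hT : (s/α) * ((1 - x^2) ^ (p:ℝ)/(2*p)) < E1 * (2 * (Real.exp (-(1/2))/s1)) := by
    have hrhs : E1 * (2 * (Real.exp (-(1/2):ℝ)/s1)) = (2*E1) / (Real.exp ((1:ℝ)/2) * s1) := by
      rw [show (-(1/2):ℝ) = -((1:ℝ)/2) from by norm_num, Real.exp_neg]
      field_simp
    rw [hrhs, div_mul_div_comm, div_lt_div_iff₀ (by positivity) (by positivity)]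
    have h2p : s1^2 = 2*p := by rw [hpdef, hs1sq]; ring
    calc s * (1-x^2) ^ (p:ℝ) * (Real.exp ((1:ℝ)/2) * s1)
        ≤ s * (E1 * Real.exp ((9/20-p/nr)*α^2)) * (Real.exp ((1:ℝ)/2) * s1) := by
          apply mul_le_mul_of_nonneg_right (mul_le_mul_of_nonneg_left hW hs_pos.le) (by positivity)
      _ = (s * (Real.exp ((1:ℝ)/2) * Real.exp ((9/20-p/nr)*α^2))) * (E1 * s1) := by ring
      _ < (2*s1*α) * (E1*s1) := mul_lt_mul_of_pos_right key2 (by positivity)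
      _ = 2*E1*(α*(2*p)) := by rw [← h2p]; ring
  have hIpos : (0:ℝ) < I := by
    have h0 : (0:ℝ) < Real.exp (-(1/2)) * s1⁻¹ := by positivity
    linarith
  rw [hβdef, div_lt_iff₀ (by linarith : (0:ℝ) < 2*I)]
  calc N ≤ (s/α) * ((1 - x^2) ^ (p:ℝ)/(2*p)) := hN
    _ < E1 * (2 * (Real.exp (-(1/2))/s1)) := hT
    _ ≤ E1 * (2 * I) := by
        apply mul_le_mul_of_nonneg_left _ hE1pos.le
        apply mul_le_mul_of_nonneg_left _ (by norm_num : (0:ℝ) ≤ 2)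
        rw [div_eq_mul_inv]
        exact hI

private lemma case_ge4 (n : ℕ) (hn : 4 ≤ n) (β α : ℝ) (hβ0 : 0 < β) (hα0 : 0 < α)
    (hα2n : α^2 < (n:ℝ)) (hα15 : (1.5403:ℝ) < α^2)
    (hSα : (∫ t in (α / Real.sqrt n)..1, (1 - t ^ 2) ^ (((n : ℝ) - 3) / 2)) /
        (2 * ∫ t in (0 : ℝ)..1, (1 - t ^ 2) ^ (((n : ℝ) - 3) / 2)) = β) :
    β < Real.exp (-(9/20) * α^2) := by
  have hnr4 : (4:ℝ) ≤ (n:ℝ) := by exact_mod_cast hn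
  rw [show ((n:ℝ) - 3)/2 = ((n:ℝ)-1)/2 - 1 from by ring] at hSα
  set nr := (n:ℝ) with hnrdef
  set p := (nr - 1)/2 with hpdef
  have hp1 : (1:ℝ) ≤ p := by rw [hpdef]; linarith
  have hp0 : (0:ℝ) < p := by linarith
  have hp10 : (0:ℝ) ≤ p - 1 := by linarith
  set s := Real.sqrt nr with hsdef
  set s1 := Real.sqrt (nr - 1) with hs1def
  have hs_pos : 0 < s := Real.sqrt_pos.mpr (by linarith)
  have hs1_pos : 0 < s1 := Real.sqrt_pos.mpr (by linarith)
  have hssq : s^2 = nr := Real.sq_sqrt (by linarith)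
  have hs1sq : s1^2 = nr - 1 := Real.sq_sqrt (by linarith)
  have hαs : α < s := by nlinarith [hs_pos, hssq]
  set x := α / s with hxdef
  have hx0 : 0 < x := div_pos hα0 hs_pos
  have hx1 : x < 1 := (div_lt_one hs_pos).mpr hαs
  have hx2 : x^2 = α^2/nr := by rw [hxdef, div_pow, hssq]
  have hcontg : Continuous fun t : ℝ => (1 - t^2) ^ (p - 1 : ℝ) := by
    rw [continuous_iff_continuousAt]; intro t
    exact (continuous_const.sub (continuous_pow 2)).continuousAt.rpow_const (Or.inr hp10)
  have hgint : ∀ a b : ℝ, IntervalIntegrable (fun t : ℝ => (1 - t^2) ^ (p - 1:ℝ)) volume a b :=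
    fun a b => hcontg.intervalIntegrable a b
  -- numerator bound
  have hN : (∫ t in x..1, (1 - t^2) ^ (p - 1:ℝ)) ≤ (s/α) * ((1 - x^2) ^ (p:ℝ) / (2*p)) := by
    have hmono : (∫ t in x..1, (1 - t^2) ^ (p - 1:ℝ))
        ≤ ∫ t in x..1, x⁻¹ * (t * (1 - t^2) ^ (p-1:ℝ)) := by
      apply integral_mono_on hx1.le (hgint x 1)
        ((continuous_const.mul (continuous_id'.mul hcontg)).intervalIntegrable x 1)
      intro t ht
      have hg0 : 0 ≤ (1 - t^2) ^ (p-1:ℝ) :=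
        Real.rpow_nonneg (by nlinarith [ht.1, ht.2, hx0]) _
      have h1t : 1 ≤ x⁻¹ * t := by
        rw [inv_mul_eq_div, le_div_iff₀ hx0]
        linarith [ht.1]
      show (1 - t^2) ^ (p-1:ℝ) ≤ x⁻¹ * (t * (1 - t^2) ^ (p-1:ℝ))
      nlinarith [mul_nonneg (sub_nonneg.mpr h1t) hg0]
    rw [intervalIntegral.integral_const_mul, ftc_main p x hp1 hx0.le hx1.le] at hmono
    rw [show x⁻¹ = s/α from by rw [hxdef, inv_div]] at hmono
    exact hmono
  -- denominator bound
  have hIlb : Real.exp (-(1/2)) * s1⁻¹ ≤ ∫ t in (0:ℝ)..1, (1 - t^2) ^ (p-1:ℝ) := by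
    set y := s1⁻¹ with hydef
    have hy0 : 0 < y := inv_pos.mpr hs1_pos
    have hs1ge1 : (1:ℝ) ≤ s1 := by nlinarith [hs1_pos, hs1sq]
    have hy1 : y ≤ 1 := by rw [hydef]; exact inv_le_one_of_one_le₀ hs1ge1
    have hy2 : y^2 = (nr - 1)⁻¹ := by rw [hydef, inv_pow, hs1sq]
    have hb : Real.exp (-(nr-2)⁻¹) ≤ 1 - y^2 := by
      rw [hy2]
      have h0 : (0:ℝ) < nr - 2 := by linarith
      have he := Real.add_one_le_exp ((nr-2)⁻¹)
      rw [Real.exp_neg]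
      have h3 : (Real.exp ((nr-2)⁻¹))⁻¹ ≤ ((nr-2)⁻¹ + 1)⁻¹ := by
        apply inv_anti₀ (by positivity) (by linarith)
      calc (Real.exp ((nr-2)⁻¹))⁻¹ ≤ ((nr-2)⁻¹ + 1)⁻¹ := h3
        _ = 1 - (nr-1)⁻¹ := by
            have hne1 : nr - 1 ≠ 0 := by linarith
            have hne2 : nr - 2 ≠ 0 := by linarith
            rw [show (nr-2)⁻¹ + 1 = (nr-1)/(nr-2) from by field_simp; ring, inv_div,
              show (1:ℝ) - (nr-1)⁻¹ = (nr-2)/(nr-1) from by field_simp; ring]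
    have hqlb : Real.exp (-(1/2) : ℝ) ≤ (1 - y^2) ^ (p-1:ℝ) := by
      have h0 : (0:ℝ) < nr - 2 := by linarith
      calc Real.exp (-(1/2) : ℝ) ≤ Real.exp (-(nr-2)⁻¹ * (p-1)) := by
            apply Real.exp_le_exp.mpr
            rw [neg_mul, neg_le_neg_iff, inv_mul_eq_div, div_le_iff₀ h0, hpdef]
            ring_nf
            nlinarith
        _ = (Real.exp (-(nr-2)⁻¹)) ^ (p-1:ℝ) := Real.exp_mul _ _
        _ ≤ (1 - y^2) ^ (p-1:ℝ) := Real.rpow_le_rpow (Real.exp_pos _).le hb hp10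
    have hptw : ∀ t ∈ Icc (0:ℝ) y, (1 - y^2) ^ (p-1:ℝ) ≤ (1 - t^2) ^ (p-1:ℝ) := fun t ht =>
      Real.rpow_le_rpow (by nlinarith [hy1, hy0]) (by nlinarith [ht.1, ht.2]) hp10
    have hmono := integral_mono_on (μ := volume) (a := (0:ℝ)) (b := y)
      (f := fun _ => (1 - y^2) ^ (p-1:ℝ)) (g := fun t => (1 - t^2) ^ (p-1:ℝ))
      hy0.le intervalIntegrable_const (hgint 0 y) hptw
    have hconstval : (∫ _t in (0:ℝ)..y, (1 - y^2) ^ (p-1:ℝ)) = y * (1 - y^2) ^ (p-1:ℝ) := by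
      simp
    have h1 : y * Real.exp (-(1/2) : ℝ) ≤ ∫ t in (0:ℝ)..y, (1 - t^2) ^ (p-1:ℝ) := by
      calc y * Real.exp (-(1/2) : ℝ) ≤ y * (1 - y^2) ^ (p-1:ℝ) :=
            mul_le_mul_of_nonneg_left hqlb hy0.le
        _ = ∫ _t in (0:ℝ)..y, (1 - y^2) ^ (p-1:ℝ) := hconstval.symm
        _ ≤ ∫ t in (0:ℝ)..y, (1 - t^2) ^ (p-1:ℝ) := hmono
    have h2 : (0:ℝ) ≤ ∫ t in y..1, (1 - t^2) ^ (p-1:ℝ) :=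
      integral_nonneg hy1 (fun t ht => Real.rpow_nonneg (by nlinarith [ht.1, ht.2, hy0]) _)
    have hsplit := integral_add_adjacent_intervals (hgint 0 y) (hgint y 1)
    rw [mul_comm]
    linarith [hsplit, h1, h2]
  have hsplit10 : nr ≤ 9 ∨ 10 ≤ nr := by
    rcases le_or_gt nr 9 with h9 | h9
    · exact Or.inl h9
    · right
      have h1 : (9:ℝ) < ((n:ℕ):ℝ) := hnrdef ▸ h9
      have h2 : 9 < n := by exact_mod_cast h1
      have h3 : 10 ≤ n := by omega
      have h4 : (10:ℝ) ≤ ((n:ℕ):ℝ) := by exact_mod_cast h3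
      rw [hnrdef]; exact h4
  exact core nr p s s1 α x β
    (∫ t in x..1, (1 - t^2) ^ (p-1:ℝ)) (∫ t in (0:ℝ)..1, (1 - t^2) ^ (p-1:ℝ))
    hnr4 hsplit10 hpdef hssq hs_pos hs1sq hs1_pos hα0 hα15 hα2n hxdef hSα.symm hN hIlb


theorem stmt_14 (n : ℕ) (hn : 2 ≤ n) (β : ℝ) (hβ : β ∈ Set.Ioo (0 : ℝ) 0.5)
    (α : ℝ) (hα : α ∈ Set.Ioo 0 (Real.sqrt n))
    (hSα : (∫ t in (α / Real.sqrt n)..1, (1 - t ^ 2) ^ (((n : ℝ) - 3) / 2)) /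
        (2 * ∫ t in (0 : ℝ)..1, (1 - t ^ 2) ^ (((n : ℝ) - 3) / 2)) = β) :
    α < Real.sqrt (20 / 9 * Real.log (1 / β)) := by
  obtain ⟨hβ0, hβ5⟩ := hβ
  obtain ⟨hα0, hαsn⟩ := hα
  have hα2n : α^2 < (n:ℝ) := (Real.lt_sqrt hα0.le).mp hαsn
  rcases le_or_gt (α^2) (20/9 * Real.log 2) with htriv | hhard
  · have h2β : Real.log 2 < Real.log (1/β) := by
      apply Real.log_lt_log (by norm_num)
      rw [lt_div_iff₀ hβ0]
      calc (2:ℝ) * β < 2 * 0.5 := by linarith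
        _ = 1 := by norm_num
    apply (Real.lt_sqrt hα0.le).mpr
    nlinarith [h2β, htriv]
  · have hα15 : (1.5403:ℝ) < α^2 := by nlinarith [Real.log_two_gt_d9]
    have hkey : β < Real.exp (-(9/20) * α^2) := by
      rcases lt_or_ge n 4 with h4 | h4
      · interval_cases n
        · have hc : ((2:ℕ):ℝ) = (2:ℝ) := by norm_num
          rw [hc] at hSα hα2n
          rw [show ((2:ℝ) - 3)/2 = (-(1/2):ℝ) by norm_num] at hSα
          exact case2 β α hβ0 hα0 hα2n hα15 hSα
        · have hc : ((3:ℕ):ℝ) = (3:ℝ) := by norm_num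
          rw [hc] at hSα hα2n
          rw [show ((3:ℝ) - 3)/2 = (0:ℝ) by norm_num] at hSα
          simp only [Real.rpow_zero] at hSα
          exact case3 β α hα0 hα2n hα15 hSα
      · exact case_ge4 n h4 β α hβ0 hα0 hα2n hα15 hSα
    have hlog : Real.log β < -(9/20) * α^2 := by
      have h := Real.log_lt_log hβ0 hkey
      rwa [Real.log_exp] at h
    apply (Real.lt_sqrt hα0.le).mpr
    rw [one_div, Real.log_inv]
    nlinarith [hlog]
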